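/- Let D be the set of finitely supported sequences a : ℕ → {0,1} equipped with the metric d(a,b) = Σ_{i∈ℕ} |a_i − b_i|·2^i, and let ℕ carry the Euclidean metric. Then asdim(D) = 0 and asdim(ℕ) = 1; in particular the bijection f : D → ℕ, f(a) = Σ_{i∈ℕ} a_i·2^i, raises the asymptotic dimension by exactly one. -/

import Mathlib

open Metric Bornology Function Set

/-- A map between metric spaces is (coarsely) proper if preimages of bounded
sets are bounded. -/
def MetricallyProper {X Y : Type*} [MetricSpace X] [MetricSpace Y] (f : X → Y) : Prop :=
  ∀ B : Set Y, IsBounded B → IsBounded (f ⁻¹' B)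

/-- A coarse map: proper, and uniformly bornologous. -/
def CoarseMap {X Y : Type*} [MetricSpace X] [MetricSpace Y] (f : X → Y) : Prop :=
  MetricallyProper f ∧
    ∀ R > (0:ℝ), ∃ S > (0:ℝ), ∀ x x' : X, dist x x' ≤ R → dist (f x) (f x') ≤ S

/-- Coarsely surjective map. -/
def CoarselySurjective {X Y : Type*} [MetricSpace X] [MetricSpace Y] (f : X → Y) : Prop :=
  ∃ R > (0:ℝ), ∀ y : Y, ∃ x : X, dist y (f x) ≤ R

/-- `f` is coarsely `n`-to-1. -/
def CoarselyNTo1 {X Y : Type*} [MetricSpace X] [MetricSpace Y] (f : X → Y) (n : ℕ) : Prop :=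
  ∀ R > (0:ℝ), ∃ S > (0:ℝ), ∀ A : Set Y, (∀ y ∈ A, ∀ y' ∈ A, dist y y' ≤ R) →
    ∃ V : Fin n → Set X, (∀ i, ∀ x ∈ V i, ∀ x' ∈ V i, dist x x' ≤ S) ∧ f ⁻¹' A ⊆ ⋃ i, V i

/-- `f` is coarsely finite-to-1. -/
def CoarselyFiniteTo1 {X Y : Type*} [MetricSpace X] [MetricSpace Y] (f : X → Y) : Prop :=
  ∀ R > (0:ℝ), ∃ S > (0:ℝ), ∃ m : ℕ, ∀ A : Set Y, (∀ y ∈ A, ∀ y' ∈ A, dist y y' ≤ R) →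
    ∃ V : Fin m → Set X, (∀ i, ∀ x ∈ V i, ∀ x' ∈ V i, dist x x' ≤ S) ∧ f ⁻¹' A ⊆ ⋃ i, V i

/-- Two maps are close. -/
def Close {X Y : Type*} [MetricSpace X] [MetricSpace Y] (f g : X → Y) : Prop :=
  ∃ R > (0:ℝ), ∀ x : X, dist (f x) (g x) ≤ R

/-- `f` is a coarse equivalence. -/
def CoarseEquivalence {X Y : Type*} [MetricSpace X] [MetricSpace Y] (f : X → Y) : Prop :=
  CoarseMap f ∧ ∃ g : Y → X, CoarseMap g ∧ Close (f ∘ g) id ∧ Close (g ∘ f) id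

/-- `X` and `Y` are coarsely equivalent. -/
def CoarselyEquivalent (X Y : Type*) [MetricSpace X] [MetricSpace Y] : Prop :=
  ∃ f : X → Y, CoarseEquivalence f

/-- A family of subsets is uniformly bounded. -/
def UnifBounded {X : Type*} [MetricSpace X] (𝒰 : Set (Set X)) : Prop :=
  ∃ S : ℝ, ∀ U ∈ 𝒰, ∀ x ∈ U, ∀ y ∈ U, dist x y ≤ S

/-- A family of subsets is `R`-disjoint: distinct members lie at distance `> R`. -/
def RDisjointFam {X : Type*} [MetricSpace X] (𝒰 : Set (Set X)) (R : ℝ) : Prop :=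
  ∀ U ∈ 𝒰, ∀ V ∈ 𝒰, U ≠ V → ∀ x ∈ U, ∀ y ∈ V, R < dist x y

/-- `asdim X ≤ n`. -/
def ASDimLE (X : Type*) [MetricSpace X] (n : ℕ) : Prop :=
  ∀ R > (0:ℝ), ∃ 𝒰 : Fin (n + 1) → Set (Set X),
    (∀ i, UnifBounded (𝒰 i)) ∧ (∀ i, RDisjointFam (𝒰 i) R) ∧
      ∀ x : X, ∃ i, ∃ U ∈ 𝒰 i, x ∈ U

/-- The asymptotic dimension of `X`, valued in `ℕ∞`. -/
noncomputable def asdim (X : Type*) [MetricSpace X] : ℕ∞ :=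
  sInf {n : ℕ∞ | ∃ m : ℕ, n = (m : ℕ∞) ∧ ASDimLE X m}

/-- TI-increasing functions `[0,∞) → [0,∞)`. -/
def TIIncreasing (ρ : NNReal → NNReal) : Prop :=
  Monotone ρ ∧ Filter.Tendsto ρ Filter.atTop Filter.atTop

/-- The variable-radius neighborhood `N(A, ρ)` with respect to a basepoint `x₀`. -/
def GrowNbhd {X : Type*} [MetricSpace X] (x₀ : X) (A : Set X) (ρ : NNReal → NNReal) : Set X :=
  {x' | ∃ x ∈ A, nndist x' x ≤ ρ (nndist x x₀)}

/-- `f` is coarsely open (with respect to basepoints `x₀`, `y₀`). -/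
def CoarselyOpen {X Y : Type*} [MetricSpace X] [MetricSpace Y] (f : X → Y)
    (x₀ : X) (y₀ : Y) : Prop :=
  ∀ A : Set X, ¬ IsBounded A → ∀ ρ : NNReal → NNReal, TIIncreasing ρ →
    ∃ ρ' : NNReal → NNReal, TIIncreasing ρ' ∧
      GrowNbhd y₀ (f '' A) ρ' ⊆ f '' GrowNbhd x₀ A ρ

/-- `N(A, R)`, the closed `R`-neighborhood of `A`. -/
def NbhdR {X : Type*} [MetricSpace X] (A : Set X) (R : ℝ) : Set X :=
  {x | ∃ a ∈ A, dist x a ≤ R}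

/-- A finite collection of subsets is gradually disjoint. -/
def GraduallyDisjoint {X : Type*} [MetricSpace X] {k : ℕ} (A : Fin k → Set X) : Prop :=
  ∀ R > (0:ℝ), ∃ B : Set X, IsBounded B ∧
    ∀ i j, i ≠ j → Disjoint (NbhdR (A i) R \ B) (NbhdR (A j) R \ B)

/-- A finite collection of subsets diverges. -/
def Diverges {X : Type*} [MetricSpace X] {k : ℕ} (A : Fin k → Set X) : Prop :=
  ∀ R > (0:ℝ), IsBounded (⋂ i, NbhdR (A i) R)

/-- A countable collection of subsets is gradually disjoint: every finite
subcollection is. -/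
def GraduallyDisjointSeq {X : Type*} [MetricSpace X] (A : ℕ → Set X) : Prop :=
  ∀ s : Finset ℕ, ∀ R > (0:ℝ), ∃ B : Set X, IsBounded B ∧
    ∀ i ∈ s, ∀ j ∈ s, i ≠ j → Disjoint (NbhdR (A i) R \ B) (NbhdR (A j) R \ B)

/-- A countable collection of subsets diverges: some finite subcollection diverges. -/
def DivergesSeq {X : Type*} [MetricSpace X] (A : ℕ → Set X) : Prop :=
  ∃ s : Finset ℕ, ∀ R > (0:ℝ), IsBounded (⋂ i ∈ s, NbhdR (A i) R)

/-- A complex-valued function on a metric space is slowly oscillating. -/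
def SlowlyOscillating {X : Type*} [MetricSpace X] (φ : X → ℂ) : Prop :=
  ∀ R > (0:ℝ), ∀ ε > (0:ℝ), ∃ A : Set X, IsBounded A ∧
    ∀ x : X, ∀ p ∈ closedBall x R \ A, ∀ p' ∈ closedBall x R \ A, dist (φ p) (φ p') ≤ ε
/-- The coarse Cantor set: finitely supported `{0,1}`-sequences, encoded as the
finite set of indices where the sequence equals `1`, with the metric
`d(a,b) = ∑_i |a_i - b_i| · 2^i` (the sum of `2^i` over the symmetric
difference of the supports). -/
abbrev CoarseCantor : Type := Finset ℕ

noncomputable instance : MetricSpace CoarseCantor :=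
  { dist := fun A B : Finset ℕ => ∑ i ∈ symmDiff A B, (2:ℝ) ^ i
    dist_self := fun A => by
      show (∑ i ∈ symmDiff A A, (2:ℝ) ^ i) = 0
      simp [symmDiff_self]
    dist_comm := fun A B => by
      show (∑ i ∈ symmDiff A B, (2:ℝ) ^ i) = ∑ i ∈ symmDiff B A, (2:ℝ) ^ i
      rw [symmDiff_comm]
    dist_triangle := fun A B C => by
      show (∑ i ∈ symmDiff A C, (2:ℝ) ^ i) ≤
        (∑ i ∈ symmDiff A B, (2:ℝ) ^ i) + ∑ i ∈ symmDiff B C, (2:ℝ) ^ i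
      have hsub : symmDiff A C ⊆ symmDiff A B ∪ symmDiff B C := by
        simpa [Finset.sup_eq_union] using symmDiff_triangle A B C
      have h1 : ∑ i ∈ symmDiff A C, (2:ℝ) ^ i ≤
          ∑ i ∈ symmDiff A B ∪ symmDiff B C, (2:ℝ) ^ i :=
        Finset.sum_le_sum_of_subset_of_nonneg hsub (fun i _ _ => by positivity)
      have h2 := Finset.sum_union_inter (s₁ := symmDiff A B) (s₂ := symmDiff B C)
        (f := fun i : ℕ => (2:ℝ) ^ i)
      have h3 : (0:ℝ) ≤ ∑ i ∈ symmDiff A B ∩ symmDiff B C, (2:ℝ) ^ i :=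
        Finset.sum_nonneg fun i _ => by positivity
      linarith
    eq_of_dist_eq_zero := fun {A B} h => by
      have h' : (∑ i ∈ symmDiff A B, (2:ℝ) ^ i) = 0 := h
      have hempty : symmDiff A B = ∅ := by
        by_contra hne
        have hpos : 0 < ∑ i ∈ symmDiff A B, (2:ℝ) ^ i :=
          Finset.sum_pos (fun i _ => by positivity)
            (Finset.nonempty_iff_ne_empty.mpr hne)
        exact absurd h' (ne_of_gt hpos)
      have : symmDiff A B = (⊥ : Finset ℕ) := by simpa using hempty
      exact symmDiff_eq_bot.mp this }

/-- The coarse version of the Cantor map: `a ↦ ∑ aᵢ 2^i`. -/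
def cantorMap (A : CoarseCantor) : ℕ := ∑ i ∈ A, 2 ^ i


lemma dist_cc (A B : CoarseCantor) : dist A B = ∑ i ∈ symmDiff A B, (2:ℝ) ^ i := rfl

lemma dist_nat (x y : ℕ) : dist x y = |(x:ℝ) - y| := rfl

lemma cc_asdimle0 : ASDimLE CoarseCantor 0 := by
  intro R hR
  obtain ⟨n, hn⟩ := pow_unbounded_of_one_lt R (by norm_num : (1:ℝ) < 2)
  refine ⟨fun _ => {U | ∃ T : Finset ℕ,
      U = {A : CoarseCantor | A \ Finset.range n = T}}, ?_, ?_, ?_⟩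
  · intro i
    refine ⟨2 ^ n, ?_⟩
    rintro U ⟨T, rfl⟩ A hA B hB
    have hAB : A \ Finset.range n = B \ Finset.range n := by
      rw [Set.mem_setOf_eq] at hA hB; rw [hA, hB]
    have hsub : symmDiff A B ⊆ Finset.range n := by
      intro i hi
      by_contra hlt
      have hn' : n ≤ i := by simpa using hlt
      have hir : i ∉ Finset.range n := by simp [hn']
      rw [Finset.mem_symmDiff] at hi
      rcases hi with ⟨hiA, hiB⟩ | ⟨hiB, hiA⟩
      · have : i ∈ B \ Finset.range n := hAB ▸ Finset.mem_sdiff.2 ⟨hiA, hir⟩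
        exact hiB (Finset.mem_sdiff.1 this).1
      · have : i ∈ A \ Finset.range n := hAB ▸ Finset.mem_sdiff.2 ⟨hiB, hir⟩
        exact hiA (Finset.mem_sdiff.1 this).1
    rw [dist_cc]
    calc ∑ i ∈ symmDiff A B, (2:ℝ) ^ i ≤ ∑ i ∈ Finset.range n, (2:ℝ) ^ i :=
          Finset.sum_le_sum_of_subset_of_nonneg hsub (fun i _ _ => by positivity)
      _ ≤ 2 ^ n := by
          rw [geom_sum_eq (by norm_num)]
          have h2n : (0:ℝ) < 2 ^ n := by positivity
          rw [div_le_iff₀ (by norm_num)]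
          linarith
  · intro i
    rintro U ⟨T, rfl⟩ V ⟨T', rfl⟩ hUV A hA B hB
    rw [Set.mem_setOf_eq] at hA hB
    have hTT' : T ≠ T' := fun h => hUV (by rw [h])
    have hAB : A \ Finset.range n ≠ B \ Finset.range n := by
      rw [hA, hB]; exact hTT'
    obtain ⟨i, hi⟩ : ∃ i, i ∈ symmDiff (A \ Finset.range n) (B \ Finset.range n) := by
      by_contra h
      push_neg at h
      exact hAB (symmDiff_eq_bot.mp (Finset.eq_empty_iff_forall_notMem.mpr h))
    have hin : n ≤ i ∧ i ∈ symmDiff A B := by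
      rw [Finset.mem_symmDiff] at hi ⊢
      rcases hi with ⟨h1, h2⟩ | ⟨h1, h2⟩
      · obtain ⟨hmem, hnr⟩ := Finset.mem_sdiff.1 h1
        exact ⟨by simpa using hnr,
          Or.inl ⟨hmem, fun hB' => h2 (Finset.mem_sdiff.2 ⟨hB', hnr⟩)⟩⟩
      · obtain ⟨hmem, hnr⟩ := Finset.mem_sdiff.1 h1
        exact ⟨by simpa using hnr,
          Or.inr ⟨hmem, fun hA' => h2 (Finset.mem_sdiff.2 ⟨hA', hnr⟩)⟩⟩
    calc R < 2 ^ n := hn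
      _ ≤ (2:ℝ) ^ i := pow_le_pow_right₀ (by norm_num) hin.1
      _ ≤ dist A B := by
          rw [dist_cc]
          exact Finset.single_le_sum (fun j _ => by positivity) hin.2
  · intro A
    exact ⟨0, _, ⟨A \ Finset.range n, rfl⟩, rfl⟩

lemma nat_asdimle1 : ASDimLE ℕ 1 := by
  intro R hR
  set L : ℕ := ⌈R⌉₊ with hLdef
  have hL1 : 1 ≤ L := Nat.one_le_ceil_iff.mpr hR
  have hRL : R ≤ (L : ℝ) := Nat.le_ceil R
  refine ⟨fun i => {U | ∃ k : ℕ, k % 2 = i.val ∧ U = Set.Ico (k*L) ((k+1)*L)},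
      ?_, ?_, ?_⟩
  · intro i
    refine ⟨L, ?_⟩
    rintro U ⟨k, -, rfl⟩ x ⟨hx1, hx2⟩ y ⟨hy1, hy2⟩
    rw [dist_nat, abs_le]
    have c1 : (x:ℝ) < ((k+1)*L : ℕ) := by exact_mod_cast hx2
    have c2 : ((k*L : ℕ):ℝ) ≤ x := by exact_mod_cast hx1
    have c3 : (y:ℝ) < ((k+1)*L : ℕ) := by exact_mod_cast hy2
    have c4 : ((k*L : ℕ):ℝ) ≤ y := by exact_mod_cast hy1
    push_cast at c1 c2 c3 c4
    constructor <;> nlinarith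
  · intro i
    rintro U ⟨k, hk, rfl⟩ V ⟨k', hk', rfl⟩ hUV x ⟨hx1, hx2⟩ y ⟨hy1, hy2⟩
    have hkk' : k ≠ k' := by rintro rfl; exact hUV rfl
    have h2 : k + 2 ≤ k' ∨ k' + 2 ≤ k := by omega
    have key : x + L + 1 ≤ y ∨ y + L + 1 ≤ x := by
      rcases h2 with h | h
      · left
        have hm : (k+2) * L ≤ k' * L := Nat.mul_le_mul_right L h
        have he : (k+2)*L = (k+1)*L + L := by ring
        omega
      · right
        have hm : (k'+2) * L ≤ k * L := Nat.mul_le_mul_right L h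
        have he : (k'+2)*L = (k'+1)*L + L := by ring
        omega
    have hd : (L:ℝ) + 1 ≤ dist x y := by
      rw [dist_nat]
      rcases key with h | h
      · have : (x:ℝ) + L + 1 ≤ y := by exact_mod_cast h
        rw [abs_sub_comm, abs_of_nonneg (by linarith)]
        linarith
      · have : (y:ℝ) + L + 1 ≤ x := by exact_mod_cast h
        rw [abs_of_nonneg (by linarith)]
        linarith
    linarith
  · intro x
    refine ⟨⟨(x / L) % 2, by omega⟩, Set.Ico ((x/L)*L) ((x/L+1)*L), ⟨x/L, rfl, rfl⟩,
      Nat.div_mul_le_self x L, ?_⟩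
    calc x < x/L*L + L := Nat.lt_div_mul_add hL1
      _ = (x/L+1)*L := by ring

lemma not_nat_asdimle0 : ¬ ASDimLE ℕ 0 := by
  intro h
  obtain ⟨𝒰, hb, hd, hc⟩ := h 1 one_pos
  obtain ⟨S, hS⟩ := hb 0
  obtain ⟨i0, U, hU, h0U⟩ := hc 0
  have hU' : U ∈ 𝒰 0 := by rwa [Subsingleton.elim (0 : Fin 1) i0]
  have key : ∀ n : ℕ, n ∈ U := by
    intro n
    induction n with
    | zero => exact h0U
    | succ n ih =>
      obtain ⟨i, V, hV, hnV⟩ := hc (n+1)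
      have hV' : V ∈ 𝒰 0 := by rwa [Subsingleton.elim (0 : Fin 1) i]
      by_contra hne
      have hVU : V ≠ U := fun h' => hne (h' ▸ hnV)
      have := hd 0 V hV' U hU' hVU (n+1) hnV n ih
      have hdist : dist (n+1 : ℕ) n = 1 := by
        rw [dist_nat]; push_cast; simp
      rw [hdist] at this
      exact lt_irrefl 1 this
  have hSb := hS U hU' 0 (key 0) (⌈S⌉₊ + 1) (key _)
  have hdist : dist (0:ℕ) (⌈S⌉₊ + 1) = (⌈S⌉₊ : ℝ) + 1 := by
    rw [dist_nat]; push_cast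
    rw [zero_sub, abs_neg, abs_of_nonneg (by positivity)]
  rw [hdist] at hSb
  have := Nat.le_ceil S
  linarith

/-- The coarse Cantor set `D` has asymptotic dimension `0`,
while `ℕ` (with the Euclidean metric) has asymptotic dimension `1`; in
particular the bijection `f : D → ℕ`, `f(a) = ∑ aᵢ 2^i`, raises the asymptotic
dimension by exactly one. -/
theorem asdim_coarseCantor_and_asdim_nat :
    asdim CoarseCantor = 0 ∧ asdim ℕ = 1 ∧
      Function.Bijective cantorMap ∧ asdim ℕ = asdim CoarseCantor + 1 := by
  have hcc : asdim CoarseCantor = 0 :=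
    le_antisymm (sInf_le ⟨0, by norm_num, cc_asdimle0⟩) zero_le
  have hnat : asdim ℕ = 1 := by
    apply le_antisymm
    · exact sInf_le ⟨1, by norm_num, nat_asdimle1⟩
    · apply le_sInf
      rintro n ⟨m, rfl, hm⟩
      cases m with
      | zero => exact absurd hm not_nat_asdimle0
      | succ m => exact_mod_cast Nat.one_le_iff_ne_zero.2 (Nat.succ_ne_zero m)
  refine ⟨hcc, hnat, ?_, by rw [hcc, hnat]; rfl⟩
  show Function.Bijective (fun A : Finset ℕ => ∑ i ∈ A, 2 ^ i)
  open Finset Nat in exact equivBitIndices.symm.bijective
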